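/- Let A be a Banach algebra with a left approximate identity and φ a non-zero multiplicative linear functional on A. If A is left φ-biflat, then A is left φ-amenable. -/

import Mathlib

/-!
We realize the bidual `(B ⊗_p B)**` of the projective tensor product of a Banach algebra `B`
with itself canonically as the dual of the Banach space `B →L[ℂ] B* ` of bounded bilinear
forms on `B` (the latter being isometrically isomorphic to `(B ⊗_p B)*`).  All the canonical
Banach `B`-bimodule actions are spelled out explicitly through this identification.
The multiplication of the Banach algebra `B` is encoded as a bounded bilinear map
`μ : B →L[ℂ] B →L[ℂ] B` (for a Banach algebra `A`, `μ = ContinuousLinearMap.mul ℂ A`).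
-/

noncomputable section

open ContinuousLinearMap NormedSpace

/-- The space of bounded bilinear forms on `B`, canonically the dual of the projective
tensor product `B ⊗_p B`. -/
abbrev BilForm (B : Type*) [NormedAddCommGroup B] [NormedSpace ℂ B] : Type _ :=
  B →L[ℂ] StrongDual ℂ B

/-- The bidual of the projective tensor product `B ⊗_p B`, realized canonically as the dual of
the Banach space of bounded bilinear forms on `B`. -/
abbrev TensorBidual (B : Type*) [NormedAddCommGroup B] [NormedSpace ℂ B] : Type _ :=
  StrongDual ℂ (BilForm B)

/-- The bidual `B**` of a normed space `B`. -/
abbrev Bidual (B : Type*) [NormedAddCommGroup B] [NormedSpace ℂ B] : Type _ :=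
  StrongDual ℂ (StrongDual ℂ B)

variable {B : Type*} [NormedAddCommGroup B] [NormedSpace ℂ B]

/-- The left action of `a ∈ B` (with multiplication `μ`) on `(B ⊗_p B)**`:
`(a • T) β = T ((x, y) ↦ β (a x, y))`, the canonical bidual extension of the
`B`-bimodule action `a • (x ⊗ y) = (a x) ⊗ y` on `B ⊗_p B`. -/
def tensorLSmul (μ : B →L[ℂ] B →L[ℂ] B) (a : B) (T : TensorBidual B) : TensorBidual B :=
  T.comp ((compL ℂ B B (StrongDual ℂ B)).flip (μ a))

/-- The right action of `a ∈ B` on `(B ⊗_p B)**`: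
`(T • a) β = T ((x, y) ↦ β (x, y a))`, the canonical bidual extension of the
`B`-bimodule action `(x ⊗ y) • a = x ⊗ (y a)` on `B ⊗_p B`. -/
def tensorRSmul (μ : B →L[ℂ] B →L[ℂ] B) (T : TensorBidual B) (a : B) : TensorBidual B :=
  T.comp (compL ℂ B (StrongDual ℂ B) (StrongDual ℂ B) ((compL ℂ B B ℂ).flip (μ.flip a)))

/-- `π_B^* ψ`, the image of a functional `ψ ∈ B*` under the adjoint of the product
morphism `π_B : B ⊗_p B → B`; as a bilinear form it is `(x, y) ↦ ψ (x y)`.  Thus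
`π_B** T ψ = T (piDual μ ψ)` for `T ∈ (B ⊗_p B)**`. -/
def piDual (μ : B →L[ℂ] B →L[ℂ] B) (ψ : StrongDual ℂ B) : BilForm B :=
  (compL ℂ B B ℂ ψ).comp μ

/-- The left action of `a ∈ B` on the bidual `B**`: `(a • m) f = m (f ∘ (a * ·))`. -/
def bidualLSmul (μ : B →L[ℂ] B →L[ℂ] B) (a : B) (m : Bidual B) : Bidual B :=
  m.comp ((compL ℂ B B ℂ).flip (μ a))

/-- A Banach algebra `B` (with multiplication `μ` and a multiplicative functional `ψ`) is
*left `ψ`-biflat* if there is a bounded linear map `ρ : B → (B ⊗_p B)**` with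
`ρ (a b) = ψ (b) ρ (a) = a • ρ (b)` for all `a, b ∈ B`, and `ψ̃ ∘ π_B** ∘ ρ = ψ`
(note `(ψ̃ ∘ π_B**) T = T (piDual μ ψ)`). -/
instance instTopologicalSpaceTensorBidual : TopologicalSpace (TensorBidual B) :=
  @ContinuousLinearMap.topologicalSpace ℂ ℂ _ _ (RingHom.id ℂ) (BilForm B) ℂ _ _ _ _ _ _ _

def IsLeftBiflat (μ : B →L[ℂ] B →L[ℂ] B) (ψ : StrongDual ℂ B) : Prop :=
  ∃ ρ : B →L[ℂ] TensorBidual B,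
    (∀ a b : B, ρ (μ a b) = ψ b • ρ a ∧ ρ (μ a b) = tensorLSmul μ a (ρ b)) ∧
    ∀ a : B, ρ a (piDual μ ψ) = ψ a

/-- A Banach algebra `B` is *left `ψ`-amenable* if there is `m ∈ B**` with
`a • m = ψ (a) m` for all `a ∈ B` and `ψ̃ (m) = m (ψ) = 1`. -/
def IsLeftAmenable (μ : B →L[ℂ] B →L[ℂ] B) (ψ : StrongDual ℂ B) : Prop :=
  ∃ m : Bidual B, (∀ (a : B) (f : StrongDual ℂ B), m (f.comp (μ a)) = ψ a * m f) ∧ m ψ = 1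

/-- `piDual μ` as a continuous linear map in `ψ`. -/
def piDualL (μ : B →L[ℂ] B →L[ℂ] B) : StrongDual ℂ B →L[ℂ] BilForm B :=
  ((compL ℂ B (B →L[ℂ] B) (StrongDual ℂ B)).flip μ).comp (compL ℂ B B ℂ)

lemma piDualL_apply (μ : B →L[ℂ] B →L[ℂ] B) (ψ : StrongDual ℂ B) :
    piDualL μ ψ = piDual μ ψ := rfl

variable {A : Type*} [NonUnitalNormedRing A] [NormedSpace ℂ A]
  [IsScalarTower ℂ A A] [SMulCommClass ℂ A A] [CompleteSpace A]

/-- if a Banach algebra `A` has a left approximate identity (a net `(e_α)`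
with `e_α a → a` in norm for every `a ∈ A`, encoded by a filter) and `A` is left
`φ`-biflat, then `A` is left `φ`-amenable. -/
theorem left_phi_amenable_of_left_phi_biflat_of_lai
    (φ : A →L[ℂ] ℂ) (hφ_ne : φ ≠ 0)
    (hφ_mul : ∀ a b : A, φ (a * b) = φ a * φ b)
    (hlai : ∃ l : Filter A, l.NeBot ∧ ∀ a : A, Filter.Tendsto (fun e => e * a) l (nhds a))
    (hbf : IsLeftBiflat (ContinuousLinearMap.mul ℂ A) φ) :
    IsLeftAmenable (ContinuousLinearMap.mul ℂ A) φ := by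
  obtain ⟨ρ, hρ, hπ⟩ := hbf
  obtain ⟨l, hne, htend⟩ := hlai
  obtain ⟨a, ha⟩ : ∃ a : A, φ a ≠ 0 := by
    by_contra h
    push_neg at h
    exact hφ_ne (ContinuousLinearMap.ext fun x => by simp [h x])
  set a₀ := (φ a)⁻¹ • a with ha₀
  have hφa₀ : φ a₀ = 1 := by simp [ha₀, inv_mul_cancel₀ ha]
  set T := ρ a₀ with hT
  have hμ : ∀ x y : A, (ContinuousLinearMap.mul ℂ A) x y = x * y := fun _ _ => rfl
  haveI : T2Space (TensorBidual A) := by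
    letI : NormedAddCommGroup (BilForm A) := inferInstance
    letI : NormedSpace ℂ (BilForm A) := inferInstance
    exact (inferInstance : T2Space (StrongDual ℂ (BilForm A)))
  haveI : ContinuousConstSMul ℂ (TensorBidual A) := by
    letI : NormedAddCommGroup (BilForm A) := inferInstance
    letI : NormedSpace ℂ (BilForm A) := inferInstance
    exact (inferInstance : ContinuousConstSMul ℂ (StrongDual ℂ (BilForm A)))
  have hTlim : Filter.Tendsto (fun e : A => ρ e) l (nhds T) := by
    have h1 : Filter.Tendsto (fun e : A => ρ (e * a₀)) l (nhds (ρ a₀)) :=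
      (ρ.continuous.tendsto _).comp (htend a₀)
    have heq : ∀ e : A, ρ (e * a₀) = ρ e := fun e => by
      have h2 := (hρ e a₀).1
      rw [hμ] at h2; rw [h2, hφa₀, one_smul]
    exact h1.congr heq
  have hρa : ∀ b : A, ρ b = φ b • T := by
    intro b
    have h1 : Filter.Tendsto (fun e : A => ρ (e * b)) l (nhds (ρ b)) :=
      (ρ.continuous.tendsto _).comp (htend b)
    have h2 : Filter.Tendsto (fun e : A => φ b • ρ e) l (nhds (φ b • T)) :=
      hTlim.const_smul _
    have heq : ∀ e : A, ρ (e * b) = φ b • ρ e := fun e => by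
      have h3 := (hρ e b).1; rwa [hμ] at h3
    exact tendsto_nhds_unique (h1.congr heq) h2
  have hlsmul : ∀ b : A, tensorLSmul (ContinuousLinearMap.mul ℂ A) b T = φ b • T := by
    intro b
    have h1 := (hρ b a₀).2
    rw [hρa (ContinuousLinearMap.mul ℂ A b a₀), hμ, hφ_mul, hφa₀, mul_one] at h1
    exact h1.symm
  refine ⟨T.comp (piDualL (ContinuousLinearMap.mul ℂ A)), ?_, ?_⟩
  · intro b f
    have key : piDualL (ContinuousLinearMap.mul ℂ A) (f.comp (ContinuousLinearMap.mul ℂ A b))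
        = ((compL ℂ A A (StrongDual ℂ A)).flip ((ContinuousLinearMap.mul ℂ A) b))
            (piDualL (ContinuousLinearMap.mul ℂ A) f) := by
      ext x y
      simp [piDualL, mul_assoc]
    have h4 := congrArg (fun S : TensorBidual A => S (piDualL (ContinuousLinearMap.mul ℂ A) f))
      (hlsmul b)
    simp only [tensorLSmul, ContinuousLinearMap.comp_apply,
      ContinuousLinearMap.smul_apply] at h4 ⊢
    rw [key, h4, smul_eq_mul]
  · have := hπ a₀
    simp only [ContinuousLinearMap.comp_apply, piDualL_apply]
    rw [← hT] at this
    rw [this, hφa₀]
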